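/- Let [[A,B],[C,D]] be a unitary block operator matrix and Z a strict contraction with ‖ZA‖ < 1. Then Φ(Z) := D + C(I − ZA)⁻¹ZB is a contraction, i.e., ‖Φ(Z)‖ ≤ 1. -/

import Mathlib

open ContinuousLinearMap
open scoped ComplexInnerProductSpace

set_option maxHeartbeats 1000000 in
theorem unitary_block_transform_contraction
    {H₁ H₂ K₁ K₂ : Type*}
    [NormedAddCommGroup H₁] [InnerProductSpace ℂ H₁] [CompleteSpace H₁]
    [NormedAddCommGroup H₂] [InnerProductSpace ℂ H₂] [CompleteSpace H₂]
    [NormedAddCommGroup K₁] [InnerProductSpace ℂ K₁] [CompleteSpace K₁]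
    [NormedAddCommGroup K₂] [InnerProductSpace ℂ K₂] [CompleteSpace K₂]
    (A : H₁ →L[ℂ] K₁) (B : H₂ →L[ℂ] K₁) (C : H₁ →L[ℂ] K₂) (D : H₂ →L[ℂ] K₂)
    -- unitarity of the block operator matrix [[A, B], [C, D]] : H₁ ⊕ H₂ → K₁ ⊕ K₂,
    -- expressed through its row and column relations:
    (h₁ : A ∘L adjoint A + B ∘L adjoint B = 1)
    (h₂ : C ∘L adjoint C + D ∘L adjoint D = 1)
    (h₃ : A ∘L adjoint C + B ∘L adjoint D = 0)
    (h₄ : adjoint A ∘L A + adjoint C ∘L C = 1)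
    (h₅ : adjoint B ∘L B + adjoint D ∘L D = 1)
    (h₆ : adjoint A ∘L B + adjoint C ∘L D = 0)
    (Z : K₁ →L[ℂ] H₁) (hZ : ‖Z‖ < 1) (hZA : ‖Z ∘L A‖ < 1)
    (Φ : H₂ →L[ℂ] K₂)
    (hΦ : Φ = D + C ∘L Ring.inverse (1 - Z ∘L A) ∘L Z ∘L B) :
    ‖Φ‖ ≤ 1 := by
  obtain ⟨T, hTdef⟩ : ∃ T' : H₁ →L[ℂ] H₁, T' = Ring.inverse (1 - Z ∘L A) := ⟨_, rfl⟩
  have hΦ' : Φ = D + C ∘L T ∘L Z ∘L B := by rw [hΦ, hTdef]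
  clear hΦ
  have hUnit : IsUnit ((1 : H₁ →L[ℂ] H₁) - Z ∘L A) := by
    simpa using (Units.oneSub (Z ∘L A) hZA).isUnit
  have hTU : T ∘L (1 - Z ∘L A) = 1 := by
    rw [hTdef]
    simpa [mul_def] using Ring.inverse_mul_cancel _ hUnit
  have adj1 : adjoint (1 : H₁ →L[ℂ] H₁) = 1 := by
    rw [one_def]; exact adjoint_id
  have hadj : (1 - adjoint A ∘L adjoint Z) ∘L adjoint T = (1 : H₁ →L[ℂ] H₁) := by
    have h := congrArg (adjoint (𝕜 := ℂ)) hTU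
    rw [adjoint_comp, map_sub, adjoint_comp, adj1] at h
    simpa using h
  have key : ∀ y : K₂, ‖adjoint Φ y‖ ≤ ‖y‖ := by
    intro y
    obtain ⟨w, hwdef⟩ : ∃ w' : H₁, w' = adjoint T (adjoint C y) := ⟨_, rfl⟩
    obtain ⟨v, hvdef⟩ : ∃ v' : K₁, v' = adjoint Z w := ⟨_, rfl⟩
    obtain ⟨u, hudef⟩ : ∃ u' : H₁, u' = adjoint A v := ⟨_, rfl⟩
    have hw : adjoint C y = w - u := by
      have h := congrFun (congrArg (DFunLike.coe) hadj) (adjoint C y)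
      simp only [comp_apply, sub_apply, one_apply] at h
      rw [hwdef, hudef, hvdef, hwdef]
      exact h.symm
    have hDy : D (adjoint D y) = y - C (adjoint C y) := by
      have h := congrFun (congrArg (DFunLike.coe) h₂) y
      simp only [add_apply, comp_apply, one_apply] at h
      exact eq_sub_of_add_eq' h
    have hBy : B (adjoint D y) = - A (adjoint C y) := by
      have h := congrFun (congrArg (DFunLike.coe) h₃) y
      simp only [add_apply, comp_apply, zero_apply] at h
      exact eq_neg_of_add_eq_zero_right h
    have hBv : B (adjoint B v) = v - A u := by
      have h := congrFun (congrArg (DFunLike.coe) h₁) v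
      simp only [add_apply, comp_apply, one_apply] at h
      rw [← hudef] at h
      exact eq_sub_of_add_eq' h
    have eD : ‖adjoint D y‖^2 = ‖y‖^2 - ‖adjoint C y‖^2 := by
      have h : ⟪adjoint D y, adjoint D y⟫ = ⟪y, y⟫ - ⟪adjoint C y, adjoint C y⟫ := by
        rw [adjoint_inner_left, hDy, inner_sub_right, ← adjoint_inner_left]
      have h2 : RCLike.re ⟪adjoint D y, adjoint D y⟫
          = RCLike.re (⟪y, y⟫ - ⟪adjoint C y, adjoint C y⟫) := by rw [h]
      simpa [inner_self_eq_norm_sq, map_sub, ← Complex.ofReal_pow, Complex.ofReal_re] using h2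
    have eB : ‖adjoint B v‖^2 = ‖v‖^2 - ‖u‖^2 := by
      have h : ⟪adjoint B v, adjoint B v⟫ = ⟪v, v⟫ - ⟪u, u⟫ := by
        rw [adjoint_inner_left, hBv, inner_sub_right, ← adjoint_inner_left, ← hudef]
      have h2 : RCLike.re ⟪adjoint B v, adjoint B v⟫
          = RCLike.re (⟪v, v⟫ - ⟪u, u⟫) := by rw [h]
      simpa [inner_self_eq_norm_sq, map_sub, ← Complex.ofReal_pow, Complex.ofReal_re] using h2
    have eCross : RCLike.re ⟪adjoint D y, adjoint B v⟫
        = -(RCLike.re ⟪w, u⟫ - ‖u‖^2) := by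
      have h : ⟪adjoint D y, adjoint B v⟫ = -(⟪w, u⟫ - ⟪u, u⟫) := by
        rw [adjoint_inner_right, hBy, inner_neg_left, ← adjoint_inner_right, ← hudef, hw,
          inner_sub_left]
      have h2 : RCLike.re ⟪adjoint D y, adjoint B v⟫
          = RCLike.re (-(⟪w, u⟫ - ⟪u, u⟫)) := by rw [h]
      simpa [inner_self_eq_norm_sq, map_sub, map_neg, ← Complex.ofReal_pow, Complex.ofReal_re] using h2
    have eC : ‖adjoint C y‖^2 = ‖w‖^2 - 2 * RCLike.re ⟪w, u⟫ + ‖u‖^2 := by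
      rw [hw]; exact norm_sub_sq (𝕜 := ℂ) w u
    have eΦ : ‖adjoint Φ y‖^2
        = ‖adjoint D y‖^2 + 2 * RCLike.re ⟪adjoint D y, adjoint B v⟫ + ‖adjoint B v‖^2 := by
      have hΦy : adjoint Φ y = adjoint D y + adjoint B v := by
        rw [hΦ']
        simp only [map_add, adjoint_comp, add_apply, comp_apply]
        rw [← hwdef, ← hvdef]
      rw [hΦy]; exact norm_add_sq (𝕜 := ℂ) _ _
    have ev : ‖v‖ ≤ ‖w‖ := by
      calc ‖v‖ = ‖adjoint Z w‖ := by rw [hvdef]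
        _ ≤ ‖adjoint Z‖ * ‖w‖ := le_opNorm _ _
        _ ≤ 1 * ‖w‖ := by
            have hZ' : ‖adjoint Z‖ = ‖Z‖ :=
              (adjoint : (K₁ →L[ℂ] H₁) ≃ₗᵢ⋆[ℂ] (H₁ →L[ℂ] K₁)).norm_map Z
            have := norm_nonneg w
            nlinarith
        _ = ‖w‖ := one_mul _
    have hsq : ‖adjoint Φ y‖^2 ≤ ‖y‖^2 := by
      nlinarith [pow_le_pow_left₀ (norm_nonneg v) ev 2]
    exact (pow_le_pow_iff_left₀ (norm_nonneg _) (norm_nonneg _) two_ne_zero).mp hsq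
  have hnorm : ‖adjoint Φ‖ ≤ 1 :=
    opNorm_le_bound _ zero_le_one (fun y => by simpa using key y)
  have hnn : ‖Φ‖ = ‖adjoint Φ‖ :=
    ((adjoint : (H₂ →L[ℂ] K₂) ≃ₗᵢ⋆[ℂ] (K₂ →L[ℂ] H₂)).norm_map Φ).symm
  rw [hnn]
  exact hnorm
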